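/- Let (X_k) be a real-valued stochastic process adapted to a filtration, with X_0 = 0, such that for some η > 0, E(X_{k+1} | F_k) ≤ X_k − η for all k, and |X_{k+1} − X_k| ≤ M almost surely for some M > 0. Then there exists q ∈ (0,1), depending only on M and η, such that for all ℓ > 0, the probability that X_k ever reaches level ℓ or above is at most q^ℓ. -/

import Mathlib

open MeasureTheory ProbabilityTheory

/-- Maximal inequality for a nonnegative supermartingale:
`ε * P(max_{k ≤ n} Y k ≥ ε) ≤ E[Y 0]`. -/
lemma supermart_maximal {Ω : Type} {m0 : MeasurableSpace Ω} {P : Measure Ω}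
    [IsProbabilityMeasure P] {ℱ : Filtration ℕ m0} {Y : ℕ → Ω → ℝ}
    (hY : Supermartingale Y ℱ P) (hpos : ∀ k ω, 0 ≤ Y k ω) {ε : ℝ} (hε : 0 < ε) (n : ℕ) :
    ENNReal.ofReal ε * P {ω | ∃ k ≤ n, ε ≤ Y k ω} ≤ ENNReal.ofReal (∫ ω, Y 0 ω ∂P) := by
  set A := {ω | ∃ k ≤ n, ε ≤ Y k ω} with hAdef
  set τ : Ω → WithTop ℕ := fun ω => ((hittingBtwn Y (Set.Ici ε) 0 n ω : ℕ) : WithTop ℕ) with hτdef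
  have hτ : IsStoppingTime ℱ τ := hY.stronglyAdapted.adapted.isStoppingTime_hittingBtwn measurableSet_Ici
  have hτle : ∀ ω, τ ω ≤ n := fun ω => WithTop.coe_le_coe.2 (hittingBtwn_le ω)
  have hsv_int : Integrable (stoppedValue Y τ) P :=
    integrable_stoppedValue ℕ hτ hY.integrable hτle
  have hAmeas : MeasurableSet A := by
    have : A = ⋃ k, ⋃ _ : k ≤ n, {ω | ε ≤ Y k ω} := by
      ext ω; simp [hAdef]
    rw [this]
    exact MeasurableSet.iUnion fun k => MeasurableSet.iUnion fun _ =>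
      measurableSet_le measurable_const ((hY.stronglyAdapted k).measurable.le (ℱ.le k))
  have hsv_ge : ∀ ω ∈ A, ε ≤ stoppedValue Y τ ω := by
    intro ω hω
    obtain ⟨k, hk, hYk⟩ := hω
    have : stoppedValue Y τ ω ∈ Set.Ici ε :=
      stoppedValue_hittingBtwn_mem ⟨k, ⟨Nat.zero_le _, hk⟩, hYk⟩
    exact this
  have h1 : ε * (P A).toReal ≤ ∫ ω in A, stoppedValue Y τ ω ∂P :=
    by have := setIntegral_ge_of_const_le hAmeas (measure_ne_top _ _) hsv_ge hsv_int.integrableOn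
       rw [smul_eq_mul, measureReal_def, mul_comm] at this; exact this
  have h2 : ∫ ω in A, stoppedValue Y τ ω ∂P ≤ ∫ ω, stoppedValue Y τ ω ∂P :=
    setIntegral_le_integral hsv_int
      (Filter.Eventually.of_forall fun ω => hpos _ ω)
  have h3 : ∫ ω, stoppedValue Y τ ω ∂P ≤ ∫ ω, Y 0 ω ∂P := by
    have hmono := hY.neg.expected_stoppedValue_mono (isStoppingTime_const ℱ 0) hτ
      (fun ω => WithTop.coe_le_coe.2 (Nat.zero_le _)) hτle
    have hconst : stoppedValue (-Y) (fun _ => (0:ℕ)) = -Y 0 := stoppedValue_const (-Y) 0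
    have hneg : stoppedValue (-Y) τ = -stoppedValue Y τ := rfl
    change ∫ x, (-Y 0) x ∂P ≤ ∫ x, (-stoppedValue Y τ) x ∂P at hmono
    simp only [Pi.neg_apply] at hmono
    rw [integral_neg, integral_neg, neg_le_neg_iff] at hmono
    exact hmono
  calc ENNReal.ofReal ε * P A = ENNReal.ofReal (ε * (P A).toReal) := by
        rw [ENNReal.ofReal_mul hε.le, ENNReal.ofReal_toReal (measure_ne_top _ _)]
    _ ≤ ENNReal.ofReal (∫ ω, Y 0 ω ∂P) :=
        ENNReal.ofReal_le_ofReal (h1.trans (h2.trans h3))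

theorem ruin_bound (η M : ℝ) (hη : 0 < η) (hM : 0 < M) :
    ∃ q ∈ Set.Ioo (0:ℝ) 1,
      ∀ (Ω : Type) (_ : MeasurableSpace Ω) (P : Measure Ω)
        (_ : IsProbabilityMeasure P) (ℱ : Filtration ℕ ‹MeasurableSpace Ω›)
        (X : ℕ → Ω → ℝ),
        Adapted ℱ X →
        (∀ k, Integrable (X k) P) →
        (∀ ω, X 0 ω = 0) →
        (∀ k, (P[X (k + 1) | ℱ k]) ≤ᵐ[P] fun ω => X k ω - η) →
        (∀ k, ∀ᵐ ω ∂P, |X (k + 1) ω - X k ω| ≤ M) →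
        ∀ ℓ : ℝ, 0 < ℓ →
          P {ω | ∃ k, X k ω ≥ ℓ} ≤ ENNReal.ofReal (q ^ ℓ) := by
  set lam : ℝ := min (1 / M) (η / M ^ 2) with hlamdef
  have hlam : 0 < lam := lt_min (by positivity) (by positivity)
  have hlamM : lam * M ≤ 1 := by
    have h : lam ≤ 1 / M := min_le_left _ _
    calc lam * M ≤ (1 / M) * M := by nlinarith
      _ = 1 := by field_simp
  have hc : (3/4) * (lam * M) ^ 2 ≤ lam * η := by
    have h1 : lam ≤ η / M ^ 2 := min_le_right _ _
    have h2 : lam * M ^ 2 ≤ η := by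
      calc lam * M ^ 2 ≤ (η / M ^ 2) * M ^ 2 := by nlinarith
        _ = η := by field_simp
    nlinarith
  refine ⟨Real.exp (-lam), ⟨Real.exp_pos _, Real.exp_lt_one_iff.2 (by linarith)⟩, ?_⟩
  intro Ω m0 P hPprob ℱ X hadp hint hX0 hdrift hbdd ℓ hℓ
  set c : ℝ := (3/4) * (lam * M) ^ 2 with hcdef
  -- the exponential process
  set Y : ℕ → Ω → ℝ := fun k ω => Real.exp (lam * X k ω) with hYdef
  have hYpos : ∀ k ω, 0 < Y k ω := fun k ω => Real.exp_pos _
  have hXm : ∀ k, Measurable (X k) := fun k => (hadp k).le (ℱ.le k)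
  have hXb : ∀ k, ∀ᵐ ω ∂P, |X k ω| ≤ k * M := by
    intro k
    induction k with
    | zero => filter_upwards with ω; simp [hX0 ω]
    | succ k ih =>
      filter_upwards [ih, hbdd k] with ω h1 h2
      have h3 : |X (k+1) ω| ≤ |X (k+1) ω - X k ω| + |X k ω| := by
        calc |X (k+1) ω| = |(X (k+1) ω - X k ω) + X k ω| := by ring_nf
          _ ≤ _ := abs_add_le _ _
      push_cast
      nlinarith
  have hYsm : ∀ k, StronglyMeasurable[ℱ k] (Y k) := fun k =>
    (Real.measurable_exp.comp ((hadp k).const_mul lam)).stronglyMeasurable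
  have hYint : ∀ k, Integrable (Y k) P := by
    intro k
    refine Integrable.mono' (integrable_const (Real.exp (lam * (k * M))))
      ((hYsm k).mono (ℱ.le k)).aestronglyMeasurable ?_
    filter_upwards [hXb k] with ω hω
    rw [Real.norm_eq_abs, abs_of_pos (hYpos k ω)]
    exact Real.exp_le_exp.2 (by nlinarith [le_abs_self (X k ω)])
  -- Y is a supermartingale
  have hYsuper : Supermartingale Y ℱ P := by
    refine supermartingale_nat hYsm hYint fun k => ?_
    set δ : Ω → ℝ := X (k+1) - X k with hδdef
    have hδapp : ∀ ω, δ ω = X (k+1) ω - X k ω := fun ω => rfl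
    have hδint : Integrable δ P := (hint (k+1)).sub (hint k)
    set Z : Ω → ℝ := fun ω => Real.exp (lam * δ ω) with hZdef
    have hZm : Measurable Z :=
      Real.measurable_exp.comp (((hXm (k+1)).sub (hXm k)).const_mul lam)
    have hZint : Integrable Z P := by
      refine Integrable.mono' (integrable_const (Real.exp (lam * M)))
        hZm.aestronglyMeasurable ?_
      filter_upwards [hbdd k] with ω hω
      rw [Real.norm_eq_abs, abs_of_pos (Real.exp_pos _)]
      refine Real.exp_le_exp.2 ?_
      rw [hδapp]
      exact mul_le_mul_of_nonneg_left ((le_abs_self _).trans hω) hlam.le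
    have hfact : Y (k+1) = Y k * Z := by
      funext ω
      show Real.exp (lam * X (k+1) ω) = Real.exp (lam * X k ω) * Real.exp (lam * δ ω)
      rw [← Real.exp_add]
      congr 1
      rw [hδapp]; ring
    have hpull : P[Y (k+1)|ℱ k] =ᵐ[P] Y k * P[Z|ℱ k] := by
      rw [hfact]
      exact condExp_mul_of_stronglyMeasurable_left (hYsm k) (hfact ▸ hYint (k+1)) hZint
    set W : Ω → ℝ := (fun _ => 1 + c) + lam • δ with hWdef
    have hWapp : ∀ ω, W ω = 1 + c + lam * δ ω := fun ω => rfl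
    have hWint : Integrable W P := (integrable_const _).add (hδint.smul lam)
    have hZle : Z ≤ᵐ[P] W := by
      filter_upwards [hbdd k] with ω hω
      rw [hWapp]
      set y := lam * δ ω with hydef
      have hy : |y| ≤ lam * M := by
        rw [hydef, abs_mul, abs_of_pos hlam, hδapp]
        nlinarith
      have hy1 : |y| ≤ 1 := hy.trans hlamM
      have hb := Real.exp_bound hy1 (n := 2) (by norm_num)
      norm_num [Finset.sum_range_succ] at hb
      have hb2 := (abs_le.1 hb).2
      have hsq : y ^ 2 ≤ (lam * M) ^ 2 := by
        nlinarith [sq_abs y, abs_nonneg y, mul_pos hlam hM]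
      show Real.exp y ≤ 1 + c + y
      rw [hcdef]
      nlinarith [sq_abs y]
    have hδcond : P[δ|ℱ k] ≤ᵐ[P] fun _ => -η := by
      have h1 := condExp_sub (μ := P) (m := ℱ k) (hint (k+1)) (hint k)
      have h2 : P[X k|ℱ k] = X k :=
        condExp_of_stronglyMeasurable (ℱ.le k) (hadp k).stronglyMeasurable (hint k)
      filter_upwards [h1, hdrift k] with ω hω hω2
      have e : (P[δ|ℱ k]) ω = (P[X (k+1)|ℱ k]) ω - X k ω := by
        rw [hδdef, hω, Pi.sub_apply, h2]
      rw [e]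
      have h5 : (P[X (k+1)|ℱ k]) ω ≤ X k ω - η := hω2
      show (P[X (k+1)|ℱ k]) ω - X k ω ≤ -η
      linarith
    have hWcond : P[W|ℱ k] ≤ᵐ[P] fun _ => (1:ℝ) := by
      have h1 := condExp_add (μ := P) (m := ℱ k) (integrable_const (1 + c)) (hδint.smul lam)
      have h2 := condExp_smul (μ := P) (m := ℱ k) lam δ
      have h3 : P[(fun _ => 1 + c : Ω → ℝ)|ℱ k] = fun _ => 1 + c :=
        condExp_const (ℱ.le k) _
      filter_upwards [h1, h2, hδcond] with ω hω1 hω2 hω3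
      have e : (P[W|ℱ k]) ω = (1 + c) + lam * (P[δ|ℱ k]) ω := by
        rw [hWdef, hω1, Pi.add_apply, h3, hω2, Pi.smul_apply, smul_eq_mul]
      rw [e]
      have h4 : lam * (P[δ|ℱ k]) ω ≤ lam * (-η) :=
        mul_le_mul_of_nonneg_left hω3 hlam.le
      have hcle : c ≤ lam * η := hc
      show 1 + c + lam * (P[δ|ℱ k]) ω ≤ 1
      nlinarith
    -- combine
    have hZcond : P[Z|ℱ k] ≤ᵐ[P] fun _ => (1:ℝ) :=
      (condExp_mono hZint hWint hZle).trans hWcond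
    filter_upwards [hpull, hZcond] with ω h1 h2
    rw [h1]
    show Y k ω * (P[Z|ℱ k]) ω ≤ Y k ω
    calc Y k ω * (P[Z|ℱ k]) ω ≤ Y k ω * 1 :=
          mul_le_mul_of_nonneg_left h2 (hYpos k ω).le
      _ = Y k ω := mul_one _
  -- final bound
  set ε : ℝ := Real.exp (lam * ℓ) with hεdef
  have hε : 0 < ε := Real.exp_pos _
  have hEvent : {ω | ∃ k, X k ω ≥ ℓ} = ⋃ n, {ω | ∃ k ≤ n, ε ≤ Y k ω} := by
    ext ω
    simp only [Set.mem_setOf_eq, Set.mem_iUnion]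
    constructor
    · rintro ⟨k, hk⟩
      exact ⟨k, k, le_rfl, Real.exp_le_exp.2 (mul_le_mul_of_nonneg_left hk hlam.le)⟩
    · rintro ⟨n, k, _, h⟩
      have := Real.exp_le_exp.1 h
      exact ⟨k, le_of_mul_le_mul_left this hlam⟩
  have hY0 : ∫ ω, Y 0 ω ∂P = 1 := by
    have : (fun ω => Y 0 ω) = fun _ => (1:ℝ) := by
      funext ω; simp [hYdef, hX0 ω]
    rw [this, integral_const]
    simp
  have hkey : ∀ n, P {ω | ∃ k ≤ n, ε ≤ Y k ω} ≤ ENNReal.ofReal (Real.exp (-lam) ^ ℓ) := by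
    intro n
    have h := supermart_maximal hYsuper (fun k ω => (hYpos k ω).le) hε n
    rw [hY0] at h
    have h1 : P {ω | ∃ k ≤ n, ε ≤ Y k ω} ≤ (ENNReal.ofReal ε)⁻¹ := by
      rw [ENNReal.le_inv_iff_mul_le, mul_comm]
      exact h.trans (by simp)
    refine h1.trans (le_of_eq ?_)
    have hq : Real.exp (-lam) ^ ℓ = ε⁻¹ := by
      rw [Real.rpow_def_of_pos (Real.exp_pos _), Real.log_exp, hεdef, ← Real.exp_neg]
      congr 1; ring
    rw [hq, ENNReal.ofReal_inv_of_pos hε]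
  have hmono : Monotone fun n => {ω | ∃ k ≤ n, ε ≤ Y k ω} := by
    intro a b hab ω hω
    obtain ⟨k, hk, h⟩ := hω
    exact ⟨k, hk.trans hab, h⟩
  rw [hEvent, hmono.directed_le.measure_iUnion]
  exact iSup_le hkey
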